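/- For every integer n ≥ 1, every β ≥ 0, every h ∈ ℝ, and every t ≥ 0, the Curie-Weiss measure satisfies the concentration inequality π^n({x ∈ S : |m^n(x) − tanh(β(m^n(x) + h))| ≥ β/n + t/√n}) ≤ 2 exp(−t²/(4(1+β))). -/

import Mathlib

/-!
Curie-Weiss model on S = {-1,1}^n, encoded via `Fin n → Bool` with spin
`true ↦ 1`, `false ↦ -1`.
-/

/-- Spin value of a coordinate. -/
noncomputable def spin (b : Bool) : ℝ := if b then 1 else -1

/-- Magnetization `m^n(x) = (1/n) ∑ x_i`. -/
noncomputable def mag (n : ℕ) (x : Fin n → Bool) : ℝ :=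
  (∑ i, spin (x i)) / n

/-- Hamiltonian `H^n(x) = -n (½ m^n(x)² + h m^n(x))`. -/
noncomputable def ham (n : ℕ) (h : ℝ) (x : Fin n → Bool) : ℝ :=
  -(n : ℝ) * ((1 / 2) * (mag n x) ^ 2 + h * mag n x)

/-- Partition function `Z_n = ∑_{x ∈ S} exp(-β H^n(x))`. -/
noncomputable def Zpart (n : ℕ) (β h : ℝ) : ℝ :=
  ∑ x : Fin n → Bool, Real.exp (-β * ham n h x)

/-- Curie-Weiss probability of the event `{x ∈ S : P x}`:
`π^n(P) = (∑_{x : P x} exp(-β H^n(x))) / Z_n`. -/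
noncomputable def cwProb (n : ℕ) (β h : ℝ) (P : (Fin n → Bool) → Prop) : ℝ :=
  (∑ x : Fin n → Bool,
    Set.indicator {y | P y} (fun y => Real.exp (-β * ham n h y)) x) / Zpart n β h


lemma hasDerivAt_tanh (x : ℝ) : HasDerivAt Real.tanh (1 / Real.cosh x ^ 2) x := by
  have h1 : HasDerivAt Real.sinh (Real.cosh x) x := Real.hasDerivAt_sinh x
  have h2 : HasDerivAt Real.cosh (Real.sinh x) x := Real.hasDerivAt_cosh x
  have hc : Real.cosh x ≠ 0 := (Real.cosh_pos x).ne'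
  have hdiv := h1.div h2 hc
  have heq : (Real.cosh x * Real.cosh x - Real.sinh x * Real.sinh x) / Real.cosh x ^ 2
      = 1 / Real.cosh x ^ 2 := by
    have := Real.cosh_sq_sub_sinh_sq x
    rw [show Real.cosh x * Real.cosh x - Real.sinh x * Real.sinh x
        = Real.cosh x ^ 2 - Real.sinh x ^ 2 by ring, this]
  rw [heq] at hdiv
  exact hdiv.congr_of_eventuallyEq
    (by filter_upwards with y using Real.tanh_eq_sinh_div_cosh y)

lemma tanh_lipschitz (a b : ℝ) : |Real.tanh a - Real.tanh b| ≤ |a - b| := by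
  have hlip : LipschitzWith 1 Real.tanh := by
    apply lipschitzWith_of_nnnorm_deriv_le
      (fun x => (hasDerivAt_tanh x).differentiableAt)
    intro x
    rw [(hasDerivAt_tanh x).deriv]
    have h1 : (1:ℝ) ≤ Real.cosh x ^ 2 := by nlinarith [Real.one_le_cosh x]
    have : ‖(1:ℝ) / Real.cosh x ^ 2‖ ≤ 1 := by
      rw [Real.norm_eq_abs, abs_of_nonneg (by positivity), div_le_one (by positivity)]
      exact h1
    exact_mod_cast this
  have := hlip.dist_le_mul a b
  simpa [Real.dist_eq] using this

lemma exp_hh (a b : ℝ) : |Real.exp a - Real.exp b| ≤ |a - b| * (Real.exp a + Real.exp b) / 2 := by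
  have key : ∀ u v : ℝ, v ≤ u →
      Real.exp u - Real.exp v ≤ (u - v) * (Real.exp u + Real.exp v) / 2 := by
    intro u v huv
    have hd : 0 ≤ u - v := by linarith
    set d := u - v with hdef
    clear_value d
    have main : 2 * (Real.exp d - 1) ≤ d * (Real.exp d + 1) := by
      set F : ℝ → ℝ := fun t => t * Real.exp t + t - 2 * Real.exp t + 2 with hF
      have hder : ∀ t : ℝ, HasDerivAt F ((t - 1) * Real.exp t + 1) t := by
        intro t
        have h1 : HasDerivAt (fun t : ℝ => t * Real.exp t) (Real.exp t + t * Real.exp t) t := by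
          simpa using (hasDerivAt_id t).fun_mul (Real.hasDerivAt_exp t)
        have h2 : HasDerivAt (fun t : ℝ => 2 * Real.exp t) (2 * Real.exp t) t :=
          (Real.hasDerivAt_exp t).const_mul 2
        have := ((h1.fun_add (hasDerivAt_id t)).fun_sub h2).add_const 2
        exact this.congr_deriv (by ring)
      have hmono : MonotoneOn F (Set.Ici (0:ℝ)) := by
        apply monotoneOn_of_deriv_nonneg (convex_Ici 0)
        · exact (Continuous.continuousOn (by continuity))
        · intro t _
          exact (hder t).differentiableAt.differentiableWithinAt
        · intro t _
          rw [(hder t).deriv]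
          have h3 : 1 - t ≤ Real.exp (-t) := by
            have := Real.add_one_le_exp (-t); linarith
          have hmul := mul_le_mul_of_nonneg_left h3 (Real.exp_pos t).le
          rw [← Real.exp_add] at hmul
          simp only [add_neg_cancel, Real.exp_zero] at hmul
          nlinarith [Real.exp_pos t]
      have h0 : F 0 = 0 := by simp [hF]
      have hF' := hmono Set.self_mem_Ici (Set.mem_Ici.mpr hd) hd
      rw [h0] at hF'
      simp only [hF] at hF'
      linarith
    have hsplit : Real.exp u = Real.exp v * Real.exp d := by
      rw [← Real.exp_add]; congr 1; rw [hdef]; ring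
    have hev := (Real.exp_pos v).le
    calc Real.exp u - Real.exp v = Real.exp v * (Real.exp d - 1) := by rw [hsplit]; ring
      _ ≤ Real.exp v * (d * (Real.exp d + 1) / 2) := by
          apply mul_le_mul_of_nonneg_left _ hev
          nlinarith [main]
      _ = d * (Real.exp u + Real.exp v) / 2 := by
          rw [hsplit]; ring
  rcases le_total b a with hba | hab
  · have h1 : Real.exp b ≤ Real.exp a := Real.exp_le_exp.mpr hba
    rw [abs_of_nonneg (by linarith), abs_of_nonneg (by linarith : (0:ℝ) ≤ a - b)]
    exact key a b hba
  · have h1 : Real.exp a ≤ Real.exp b := Real.exp_le_exp.mpr hab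
    rw [abs_of_nonpos (by linarith), abs_of_nonpos (by linarith : a - b ≤ 0)]
    have := key b a hab
    have hcomm : -(a - b) * (Real.exp a + Real.exp b) / 2
        = (b - a) * (Real.exp b + Real.exp a) / 2 := by ring
    rw [hcomm]
    linarith

lemma symmetrization {ι : Type*} [Fintype ι] (Q F G : ι → ℝ) (φ : ι → ι)
    (hinv : ∀ i, φ (φ i) = i) (hQφ : ∀ i, Q (φ i) = Q i) (hFφ : ∀ i, F (φ i) = -F i)
    (hQ0 : ∀ i, 0 ≤ Q i) (C : ℝ) (hb : ∀ i, |F i| * |G i - G (φ i)| ≤ 2 * C)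
    (θ : ℝ) (hθ : 0 ≤ θ) :
    ∑ i, Q i * F i * Real.exp (θ * G i) ≤ C * θ * ∑ i, Q i * Real.exp (θ * G i) := by
  have e : Equiv.Perm ι := Function.Involutive.toPerm φ hinv
  have reindex : ∀ H : ι → ℝ, ∑ i, H (φ i) = ∑ i, H i := by
    intro H
    exact Fintype.sum_equiv (Function.Involutive.toPerm φ hinv) _ _ (fun i => rfl)
  set T := ∑ i, Q i * F i * Real.exp (θ * G i) with hT
  set M := ∑ i, Q i * Real.exp (θ * G i) with hM
  have hT2 : T = ∑ i, Q i * (-F i) * Real.exp (θ * G (φ i)) := by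
    rw [hT, ← reindex (fun i => Q i * F i * Real.exp (θ * G i))]
    refine Finset.sum_congr rfl (fun i _ => ?_)
    rw [hQφ, hFφ]
  have hM2 : (∑ i, Q i * Real.exp (θ * G (φ i))) = M := by
    rw [hM, ← reindex (fun i => Q i * Real.exp (θ * G i))]
    refine Finset.sum_congr rfl (fun i _ => ?_)
    rw [hQφ]
  have h2T : 2 * T = ∑ i, Q i * F i * (Real.exp (θ * G i) - Real.exp (θ * G (φ i))) := by
    rw [two_mul]
    calc T + T = (∑ i, Q i * F i * Real.exp (θ * G i))
        + ∑ i, Q i * (-F i) * Real.exp (θ * G (φ i)) := by rw [← hT, ← hT2]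
      _ = _ := by rw [← Finset.sum_add_distrib]; exact Finset.sum_congr rfl fun i _ => by ring
  have hterm : ∀ i, Q i * F i * (Real.exp (θ * G i) - Real.exp (θ * G (φ i)))
      ≤ Q i * (C * θ) * (Real.exp (θ * G i) + Real.exp (θ * G (φ i))) := by
    intro i
    have h1 : F i * (Real.exp (θ * G i) - Real.exp (θ * G (φ i)))
        ≤ (C * θ) * (Real.exp (θ * G i) + Real.exp (θ * G (φ i))) := by
      calc F i * (Real.exp (θ * G i) - Real.exp (θ * G (φ i)))
          ≤ |F i| * |Real.exp (θ * G i) - Real.exp (θ * G (φ i))| := by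
            rw [← abs_mul]; exact le_abs_self _
        _ ≤ |F i| * (|θ * G i - θ * G (φ i)|
              * (Real.exp (θ * G i) + Real.exp (θ * G (φ i))) / 2) := by
            apply mul_le_mul_of_nonneg_left (exp_hh _ _) (abs_nonneg _)
        _ = (|F i| * |G i - G (φ i)|) * θ
              * (Real.exp (θ * G i) + Real.exp (θ * G (φ i))) / 2 := by
            rw [show θ * G i - θ * G (φ i) = θ * (G i - G (φ i)) by ring, abs_mul,
              abs_of_nonneg hθ]
            ring
        _ ≤ (2 * C) * θ * (Real.exp (θ * G i) + Real.exp (θ * G (φ i))) / 2 := by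
            have hpos : 0 ≤ θ * (Real.exp (θ * G i) + Real.exp (θ * G (φ i))) / 2 := by
              positivity
            have := mul_le_mul_of_nonneg_right (hb i) hpos
            calc (|F i| * |G i - G (φ i)|) * θ
                  * (Real.exp (θ * G i) + Real.exp (θ * G (φ i))) / 2
                = (|F i| * |G i - G (φ i)|)
                  * (θ * (Real.exp (θ * G i) + Real.exp (θ * G (φ i))) / 2) := by ring
              _ ≤ (2 * C) * (θ * (Real.exp (θ * G i) + Real.exp (θ * G (φ i))) / 2) := this
              _ = (2 * C) * θ * (Real.exp (θ * G i) + Real.exp (θ * G (φ i))) / 2 := by ring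
        _ = (C * θ) * (Real.exp (θ * G i) + Real.exp (θ * G (φ i))) := by ring
    calc Q i * F i * (Real.exp (θ * G i) - Real.exp (θ * G (φ i)))
        = Q i * (F i * (Real.exp (θ * G i) - Real.exp (θ * G (φ i)))) := by ring
      _ ≤ Q i * ((C * θ) * (Real.exp (θ * G i) + Real.exp (θ * G (φ i)))) :=
          mul_le_mul_of_nonneg_left h1 (hQ0 i)
      _ = _ := by ring
  have hsum : 2 * T ≤ C * θ * (2 * M) := by
    rw [h2T]
    calc ∑ i, Q i * F i * (Real.exp (θ * G i) - Real.exp (θ * G (φ i)))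
        ≤ ∑ i, Q i * (C * θ) * (Real.exp (θ * G i) + Real.exp (θ * G (φ i))) :=
          Finset.sum_le_sum fun i _ => hterm i
      _ = (C * θ) * ((∑ i, Q i * Real.exp (θ * G i)) + ∑ i, Q i * Real.exp (θ * G (φ i))) := by
          rw [← Finset.sum_add_distrib, Finset.mul_sum]
          exact Finset.sum_congr rfl fun i _ => by ring
      _ = C * θ * (2 * M) := by rw [hM2, ← hM]; ring
  linarith

lemma mgf_chernoff {ι : Type*} [Fintype ι] (w g : ι → ℝ) (hw : ∀ i, 0 ≤ w i) (C : ℝ) (hC : 0 < C)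
    (hkey : ∀ θ : ℝ, 0 ≤ θ →
      ∑ i, w i * g i * Real.exp (θ * g i) ≤ C * θ * ∑ i, w i * Real.exp (θ * g i))
    (s : ℝ) (hs : 0 ≤ s) :
    ∑ i ∈ Finset.univ.filter (fun i => s ≤ g i), w i
      ≤ (∑ i, w i) * Real.exp (-s ^ 2 / (2 * C)) := by
  set M : ℝ → ℝ := fun θ => ∑ i, w i * Real.exp (θ * g i) with hMdef
  have hMderiv : ∀ θ : ℝ, HasDerivAt M (∑ i, w i * g i * Real.exp (θ * g i)) θ := by
    intro θ
    have : ∀ i : ι, HasDerivAt (fun θ : ℝ => w i * Real.exp (θ * g i))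
        (w i * g i * Real.exp (θ * g i)) θ := by
      intro i
      have h1 : HasDerivAt (fun θ : ℝ => θ * g i) (g i) θ := hasDerivAt_mul_const (g i)
      have h2 := (h1.exp).const_mul (w i)
      exact h2.congr_deriv (by ring)
    simpa using HasDerivAt.fun_sum (fun i _ => this i)
  -- N θ = M θ * exp (-(C θ² /2)) is antitone on [0, ∞)
  set N : ℝ → ℝ := fun θ => M θ * Real.exp (-(C * θ ^ 2 / 2)) with hNdef
  have hNderiv : ∀ θ : ℝ, HasDerivAt N
      ((∑ i, w i * g i * Real.exp (θ * g i)) * Real.exp (-(C * θ ^ 2 / 2))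
        + M θ * (-(C * θ) * Real.exp (-(C * θ ^ 2 / 2)))) θ := by
    intro θ
    have h1 : HasDerivAt (fun θ : ℝ => -(C * θ ^ 2 / 2)) (-(C * θ)) θ := by
      have := ((hasDerivAt_pow 2 θ).const_mul C).div_const 2
      have h2 := this.fun_neg
      exact h2.congr_deriv (by ring)
    have h2 := (hMderiv θ).fun_mul h1.exp
    exact h2.congr_deriv (by ring)
  have hNanti : AntitoneOn N (Set.Ici (0:ℝ)) := by
    apply antitoneOn_of_deriv_nonpos (convex_Ici 0)
    · exact Continuous.continuousOn (by
        have : Continuous M := by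
          apply continuous_finset_sum
          intro i _
          exact continuous_const.mul ((continuous_id.mul continuous_const).rexp)
        exact this.mul (by continuity))
    · intro θ _
      exact (hNderiv θ).differentiableAt.differentiableWithinAt
    · intro θ hθ
      rw [(hNderiv θ).deriv]
      have hθ0 : (0:ℝ) ≤ θ := le_of_lt (by simpa using hθ)
      have hk := hkey θ hθ0
      have hexp : (0:ℝ) < Real.exp (-(C * θ ^ 2 / 2)) := Real.exp_pos _
      have : (∑ i, w i * g i * Real.exp (θ * g i)) * Real.exp (-(C * θ ^ 2 / 2))
          ≤ (C * θ * M θ) * Real.exp (-(C * θ ^ 2 / 2)) :=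
        mul_le_mul_of_nonneg_right hk hexp.le
      nlinarith [this]
  have hMbound : ∀ θ : ℝ, 0 ≤ θ → M θ ≤ M 0 * Real.exp (C * θ ^ 2 / 2) := by
    intro θ hθ
    have := hNanti Set.self_mem_Ici (Set.mem_Ici.mpr hθ) hθ
    have hN0 : N 0 = M 0 := by simp [hNdef]
    rw [hN0] at this
    have hexp : (0:ℝ) < Real.exp (-(C * θ ^ 2 / 2)) := Real.exp_pos _
    have h2 : M θ = N θ * Real.exp (C * θ ^ 2 / 2) := by
      rw [hNdef]
      simp only
      rw [mul_assoc, ← Real.exp_add]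
      simp
    rw [h2]
    exact mul_le_mul_of_nonneg_right this (Real.exp_pos _).le
  -- Chernoff
  set θ := s / C with hθdef
  have hθ0 : 0 ≤ θ := div_nonneg hs hC.le
  have hstep1 : ∑ i ∈ Finset.univ.filter (fun i => s ≤ g i), w i
      ≤ Real.exp (-(θ * s)) * M θ := by
    have h1 : ∀ i ∈ Finset.univ.filter (fun i => s ≤ g i),
        w i ≤ w i * Real.exp (θ * g i - θ * s) := by
      intro i hi
      simp only [Finset.mem_filter] at hi
      have : (1:ℝ) ≤ Real.exp (θ * g i - θ * s) := by
        rw [Real.one_le_exp_iff]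
        have := mul_le_mul_of_nonneg_left hi.2 hθ0
        linarith
      nlinarith [hw i]
    calc ∑ i ∈ Finset.univ.filter (fun i => s ≤ g i), w i
        ≤ ∑ i ∈ Finset.univ.filter (fun i => s ≤ g i), w i * Real.exp (θ * g i - θ * s) :=
          Finset.sum_le_sum h1
      _ ≤ ∑ i, w i * Real.exp (θ * g i - θ * s) := by
          apply Finset.sum_le_sum_of_subset_of_nonneg (Finset.filter_subset _ _)
          intro i _ _
          exact mul_nonneg (hw i) (Real.exp_pos _).le
      _ = Real.exp (-(θ * s)) * M θ := by
          rw [hMdef, Finset.mul_sum]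
          refine Finset.sum_congr rfl fun i _ => ?_
          rw [show θ * g i - θ * s = -(θ * s) + θ * g i by ring, Real.exp_add]
          ring
  have hM00 : M 0 = ∑ i, w i := by simp [hMdef]
  calc ∑ i ∈ Finset.univ.filter (fun i => s ≤ g i), w i
      ≤ Real.exp (-(θ * s)) * M θ := hstep1
    _ ≤ Real.exp (-(θ * s)) * (M 0 * Real.exp (C * θ ^ 2 / 2)) :=
        mul_le_mul_of_nonneg_left (hMbound θ hθ0) (Real.exp_pos _).le
    _ = (∑ i, w i) * Real.exp (C * θ ^ 2 / 2 - θ * s) := by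
        rw [hM00, show C * θ ^ 2 / 2 - θ * s = -(θ * s) + C * θ ^ 2 / 2 by ring,
          Real.exp_add]
        ring
    _ = (∑ i, w i) * Real.exp (-s ^ 2 / (2 * C)) := by
        congr 1
        rw [hθdef]
        field_simp
        ring
-- auxiliary
noncomputable def Si (n : ℕ) (x : Fin n → Bool) (i : Fin n) : ℝ :=
  ∑ j ∈ Finset.univ.erase i, spin (x j)

noncomputable def Gi (n : ℕ) (h : ℝ) (x : Fin n → Bool) (i : Fin n) : ℝ :=
  Si n x i / n + h

noncomputable def wght (n : ℕ) (β h : ℝ) (x : Fin n → Bool) : ℝ :=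
  Real.exp (-β * ham n h x)

noncomputable def pG (n : ℕ) (β h : ℝ) (x : Fin n → Bool) (i : Fin n) (ε : Bool) : ℝ :=
  Real.exp (β * spin ε * Gi n h x i) / (2 * Real.cosh (β * Gi n h x i))

noncomputable def fdev (n : ℕ) (β h : ℝ) (x : Fin n → Bool) : ℝ :=
  (∑ i, (spin (x i) - Real.tanh (β * Gi n h x i))) / n

lemma spin_sq (b : Bool) : spin b ^ 2 = 1 := by cases b <;> simp [spin]

lemma abs_spin_sub_le (a b : Bool) : |spin a - spin b| ≤ 2 := by
  cases a <;> cases b <;> simp [spin] <;> norm_num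

lemma sum_spin_split (n : ℕ) (x : Fin n → Bool) (i : Fin n) :
    (∑ j, spin (x j)) = spin (x i) + Si n x i :=
  (Finset.add_sum_erase _ _ (Finset.mem_univ i)).symm

lemma Si_update_self (n : ℕ) (x : Fin n → Bool) (i : Fin n) (ε : Bool) :
    Si n (Function.update x i ε) i = Si n x i := by
  refine Finset.sum_congr rfl fun j hj => ?_
  rw [Function.update_of_ne (Finset.ne_of_mem_erase hj)]

lemma Si_update_ne (n : ℕ) (x : Fin n → Bool) (i j : Fin n) (ε : Bool) (hij : j ≠ i) :
    Si n (Function.update x i ε) j = Si n x j - spin (x i) + spin ε := by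
  have hi : i ∈ Finset.univ.erase j := Finset.mem_erase.mpr ⟨fun hc => hij hc.symm, Finset.mem_univ i⟩
  have h1 : Si n (Function.update x i ε) j
      = spin ε + ∑ k ∈ (Finset.univ.erase j).erase i, spin (x k) := by
    rw [Si, ← Finset.add_sum_erase _ _ hi, Function.update_self]
    congr 1
    refine Finset.sum_congr rfl fun k hk => ?_
    rw [Function.update_of_ne (Finset.ne_of_mem_erase hk)]
  have h2 : Si n x j = spin (x i) + ∑ k ∈ (Finset.univ.erase j).erase i, spin (x k) := by
    rw [Si, ← Finset.add_sum_erase _ _ hi]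
  rw [h1, h2]
  ring

lemma Gi_update_self (n : ℕ) (h : ℝ) (x : Fin n → Bool) (i : Fin n) (ε : Bool) :
    Gi n h (Function.update x i ε) i = Gi n h x i := by
  rw [Gi, Si_update_self, Gi]

lemma wght_factor (n : ℕ) (hn : 0 < n) (β h : ℝ) (x : Fin n → Bool) (i : Fin n) :
    wght n β h x = Real.exp (β * (Si n x i ^ 2 / (2 * n) + 1 / (2 * n) + h * Si n x i))
      * Real.exp (β * spin (x i) * Gi n h x i) := by
  rw [wght, ← Real.exp_add]
  congr 1
  rw [ham, mag, Gi, sum_spin_split n x i]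
  have hn' : (n : ℝ) ≠ 0 := Nat.cast_ne_zero.mpr hn.ne'
  have hs : spin (x i) ^ 2 = 1 := spin_sq _
  set s := spin (x i)
  set S := Si n x i
  have expand : ((s + S) / n) ^ 2 = (s ^ 2 + 2 * s * S + S ^ 2) / (n:ℝ) ^ 2 := by
    field_simp
    ring
  rw [expand, hs]
  field_simp
  ring

lemma cosh_exp_pos (y : ℝ) : (0:ℝ) < 2 * Real.cosh y := by positivity

lemma pG_nonneg (n : ℕ) (β h : ℝ) (x : Fin n → Bool) (i : Fin n) (ε : Bool) :
    0 ≤ pG n β h x i ε := by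
  rw [pG]
  positivity

lemma pG_sum_one (n : ℕ) (β h : ℝ) (x : Fin n → Bool) (i : Fin n) :
    ∑ ε : Bool, pG n β h x i ε = 1 := by
  rw [Fintype.sum_bool]
  rw [pG, pG]
  have e1 : spin true = 1 := by simp [spin]
  have e2 : spin false = -1 := by simp [spin]
  rw [e1, e2]
  set y := β * Gi n h x i with hy
  have h1 : β * 1 * Gi n h x i = y := by rw [hy]; ring
  have h2 : β * -1 * Gi n h x i = -y := by rw [hy]; ring
  rw [h1, h2]
  rw [Real.cosh_eq]
  have hpos : Real.exp y + Real.exp (-y) ≠ 0 := by positivity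
  field_simp

lemma pG_mean (n : ℕ) (β h : ℝ) (x : Fin n → Bool) (i : Fin n) :
    ∑ ε : Bool, pG n β h x i ε * spin ε = Real.tanh (β * Gi n h x i) := by
  rw [Fintype.sum_bool]
  rw [pG, pG]
  have e1 : spin true = 1 := by simp [spin]
  have e2 : spin false = -1 := by simp [spin]
  rw [e1, e2]
  set y := β * Gi n h x i with hy
  have h1 : β * 1 * Gi n h x i = y := by rw [hy]; ring
  have h2 : β * -1 * Gi n h x i = -y := by rw [hy]; ring
  rw [h1, h2, Real.tanh_eq_sinh_div_cosh, Real.sinh_eq, Real.cosh_eq]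
  have hpos : Real.exp y + Real.exp (-y) ≠ 0 := by positivity
  field_simp
  ring

lemma pG_symm (n : ℕ) (hn : 0 < n) (β h : ℝ) (x : Fin n → Bool) (i : Fin n) (ε : Bool) :
    wght n β h x * pG n β h x i ε
      = wght n β h (Function.update x i ε) * pG n β h (Function.update x i ε) i (x i) := by
  rw [wght_factor n hn β h x i, wght_factor n hn β h (Function.update x i ε) i,
    pG, pG, Si_update_self, Gi_update_self, Function.update_self]
  ring


lemma fdev_lipschitz (n : ℕ) (hn : 0 < n) (β : ℝ) (hβ : 0 ≤ β) (h : ℝ)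
    (x : Fin n → Bool) (i : Fin n) (ε : Bool) :
    |fdev n β h x - fdev n β h (Function.update x i ε)| ≤ 2 * (1 + β) / n := by
  have hn' : (0:ℝ) < n := Nat.cast_pos.mpr hn
  set y := Function.update x i ε with hy
  have hdiff : fdev n β h x - fdev n β h y
      = (∑ j, ((spin (x j) - Real.tanh (β * Gi n h x j))
          - (spin (y j) - Real.tanh (β * Gi n h y j)))) / n := by
    rw [fdev, fdev, div_sub_div_same, ← Finset.sum_sub_distrib]
  have hterm : ∀ j : Fin n, |(spin (x j) - Real.tanh (β * Gi n h x j))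
      - (spin (y j) - Real.tanh (β * Gi n h y j))|
      ≤ (if j = i then 2 else 0) + 2 * β / n := by
    intro j
    by_cases hj : j = i
    · subst hj
      have hGi : Gi n h y j = Gi n h x j := Gi_update_self n h x j ε
      rw [hGi, if_pos rfl]
      have heq : (spin (x j) - Real.tanh (β * Gi n h x j))
          - (spin (y j) - Real.tanh (β * Gi n h x j)) = spin (x j) - spin (y j) := by ring
      rw [heq]
      have h1 := abs_spin_sub_le (x j) (y j)
      have hb : 0 ≤ 2 * β / n := by positivity
      linarith
    · rw [if_neg hj, zero_add]
      have hyj : y j = x j := Function.update_of_ne hj ε x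
      have heq : (spin (x j) - Real.tanh (β * Gi n h x j))
          - (spin (y j) - Real.tanh (β * Gi n h y j))
          = Real.tanh (β * Gi n h y j) - Real.tanh (β * Gi n h x j) := by
        rw [hyj]; ring
      rw [heq]
      have hGi : Gi n h y j - Gi n h x j = (spin ε - spin (x i)) / n := by
        rw [Gi, Gi, hy, Si_update_ne n x i j ε hj]
        field_simp
        ring
      have habs : |Gi n h y j - Gi n h x j| ≤ 2 / n := by
        rw [hGi, abs_div, abs_of_nonneg hn'.le]
        exact (div_le_div_iff_of_pos_right hn').mpr (abs_spin_sub_le ε (x i))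
      calc |Real.tanh (β * Gi n h y j) - Real.tanh (β * Gi n h x j)|
          ≤ |β * Gi n h y j - β * Gi n h x j| := tanh_lipschitz _ _
        _ = β * |Gi n h y j - Gi n h x j| := by
            rw [show β * Gi n h y j - β * Gi n h x j = β * (Gi n h y j - Gi n h x j) by ring,
              abs_mul, abs_of_nonneg hβ]
        _ ≤ β * (2 / n) := mul_le_mul_of_nonneg_left habs hβ
        _ = 2 * β / n := by ring
  have hsum : |∑ j, ((spin (x j) - Real.tanh (β * Gi n h x j))
      - (spin (y j) - Real.tanh (β * Gi n h y j)))| ≤ 2 + 2 * β := by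
    calc |∑ j, ((spin (x j) - Real.tanh (β * Gi n h x j))
          - (spin (y j) - Real.tanh (β * Gi n h y j)))|
        ≤ ∑ j, |(spin (x j) - Real.tanh (β * Gi n h x j))
          - (spin (y j) - Real.tanh (β * Gi n h y j))| := Finset.abs_sum_le_sum_abs _ _
      _ ≤ ∑ j : Fin n, ((if j = i then 2 else 0) + 2 * β / n) :=
          Finset.sum_le_sum fun j _ => hterm j
      _ = 2 + 2 * β := by
          rw [Finset.sum_add_distrib, Finset.sum_ite_eq' Finset.univ i (fun _ => (2:ℝ)),
            if_pos (Finset.mem_univ i), Finset.sum_const, Finset.card_univ, Fintype.card_fin,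
            nsmul_eq_mul]
          field_simp
  rw [hdiff, abs_div, abs_of_nonneg hn'.le, div_le_div_iff₀ hn' hn']
  calc |∑ j, ((spin (x j) - Real.tanh (β * Gi n h x j))
        - (spin (y j) - Real.tanh (β * Gi n h y j)))| * n ≤ (2 + 2 * β) * n :=
      mul_le_mul_of_nonneg_right hsum hn'.le
    _ = 2 * (1 + β) * n := by ring

lemma fdev_approx (n : ℕ) (hn : 0 < n) (β : ℝ) (hβ : 0 ≤ β) (h : ℝ) (x : Fin n → Bool) :
    |fdev n β h x - (mag n x - Real.tanh (β * (mag n x + h)))| ≤ β / n := by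
  have hn' : (0:ℝ) < n := Nat.cast_pos.mpr hn
  have hdiff : fdev n β h x - (mag n x - Real.tanh (β * (mag n x + h)))
      = (∑ i, (Real.tanh (β * (mag n x + h)) - Real.tanh (β * Gi n h x i))) / n := by
    have hmageq : (∑ i, spin (x i)) = n * mag n x := by
      rw [mag]; field_simp
    rw [fdev, Finset.sum_sub_distrib, Finset.sum_sub_distrib, Finset.sum_const,
      Finset.card_univ, Fintype.card_fin, nsmul_eq_mul, hmageq]
    field_simp
    ring
  have hterm : ∀ i : Fin n, |Real.tanh (β * (mag n x + h)) - Real.tanh (β * Gi n h x i)|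
      ≤ β / n := by
    intro i
    have hkey : mag n x + h - Gi n h x i = spin (x i) / n := by
      rw [mag, Gi, sum_spin_split n x i]
      field_simp
      ring
    have habs : |mag n x + h - Gi n h x i| ≤ 1 / n := by
      rw [hkey, abs_div, abs_of_nonneg hn'.le]
      apply (div_le_div_iff_of_pos_right hn').mpr
      cases x i <;> simp [spin]
    calc |Real.tanh (β * (mag n x + h)) - Real.tanh (β * Gi n h x i)|
        ≤ |β * (mag n x + h) - β * Gi n h x i| := tanh_lipschitz _ _
      _ = β * |mag n x + h - Gi n h x i| := by
          rw [show β * (mag n x + h) - β * Gi n h x i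
            = β * (mag n x + h - Gi n h x i) by ring, abs_mul, abs_of_nonneg hβ]
      _ ≤ β * (1 / n) := mul_le_mul_of_nonneg_left habs hβ
      _ = β / n := by ring
  rw [hdiff, abs_div, abs_of_nonneg hn'.le, div_le_div_iff₀ hn' hn']
  calc |∑ i, (Real.tanh (β * (mag n x + h)) - Real.tanh (β * Gi n h x i))| * n
      ≤ (∑ i, |Real.tanh (β * (mag n x + h)) - Real.tanh (β * Gi n h x i)|) * n := by
        apply mul_le_mul_of_nonneg_right (Finset.abs_sum_le_sum_abs _ _) hn'.le
    _ ≤ (∑ _i : Fin n, β / n) * n := by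
        apply mul_le_mul_of_nonneg_right (Finset.sum_le_sum fun i _ => hterm i) hn'.le
    _ = β * n := by
        rw [Finset.sum_const, Finset.card_univ, Fintype.card_fin, nsmul_eq_mul]
        field_simp

lemma pG_spin_diff (n : ℕ) (β h : ℝ) (x : Fin n → Bool) (i : Fin n) :
    ∑ ε : Bool, pG n β h x i ε * (spin (x i) - spin ε)
      = spin (x i) - Real.tanh (β * Gi n h x i) := by
  have h1 := pG_sum_one n β h x i
  have h2 := pG_mean n β h x i
  calc ∑ ε : Bool, pG n β h x i ε * (spin (x i) - spin ε)
      = spin (x i) * (∑ ε : Bool, pG n β h x i ε)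
        - ∑ ε : Bool, pG n β h x i ε * spin ε := by
        rw [Finset.mul_sum, ← Finset.sum_sub_distrib]
        exact Finset.sum_congr rfl fun ε _ => by ring
    _ = spin (x i) - Real.tanh (β * Gi n h x i) := by rw [h1, h2]; ring

lemma wght_nonneg (n : ℕ) (β h : ℝ) (x : Fin n → Bool) : 0 ≤ wght n β h x :=
  (Real.exp_pos _).le

lemma cw_key (n : ℕ) (hn : 0 < n) (β : ℝ) (hβ : 0 ≤ β) (h : ℝ)
    (σ : ℝ) (hσ : σ = 1 ∨ σ = -1) (θ : ℝ) (hθ : 0 ≤ θ) :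
    ∑ x : Fin n → Bool,
        wght n β h x * (σ * fdev n β h x) * Real.exp (θ * (σ * fdev n β h x))
      ≤ (2 * (1 + β) / n) * θ
        * ∑ x : Fin n → Bool, wght n β h x * Real.exp (θ * (σ * fdev n β h x)) := by
  have hn' : (0:ℝ) < n := Nat.cast_pos.mpr hn
  have hσabs : |σ| = 1 := by rcases hσ with rfl | rfl <;> simp
  set Q : (Fin n → Bool) × Fin n × Bool → ℝ :=
    fun z => wght n β h z.1 * pG n β h z.1 z.2.1 z.2.2 with hQdef
  set F : (Fin n → Bool) × Fin n × Bool → ℝ :=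
    fun z => σ * (spin (z.1 z.2.1) - spin z.2.2) with hFdef
  set G : (Fin n → Bool) × Fin n × Bool → ℝ :=
    fun z => σ * fdev n β h z.1 with hGdef
  set φ : (Fin n → Bool) × Fin n × Bool → (Fin n → Bool) × Fin n × Bool :=
    fun z => (Function.update z.1 z.2.1 z.2.2, z.2.1, z.1 z.2.1) with hφdef
  have hinv : ∀ z, φ (φ z) = z := by
    rintro ⟨x, i, ε⟩
    simp only [hφdef]
    refine Prod.ext ?_ (Prod.ext rfl ?_)
    · show Function.update (Function.update x i ε) i (x i) = x
      rw [Function.update_idem, Function.update_eq_self]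
    · show Function.update x i ε i = ε
      rw [Function.update_self]
  have hQφ : ∀ z, Q (φ z) = Q z := by
    rintro ⟨x, i, ε⟩
    exact (pG_symm n hn β h x i ε).symm
  have hFφ : ∀ z, F (φ z) = -F z := by
    rintro ⟨x, i, ε⟩
    simp only [hFdef, hφdef]
    rw [Function.update_self]
    ring
  have hQ0 : ∀ z, 0 ≤ Q z :=
    fun z => mul_nonneg (wght_nonneg _ _ _ _) (pG_nonneg _ _ _ _ _ _)
  have hb : ∀ z, |F z| * |G z - G (φ z)| ≤ 2 * (2 * (1 + β) / n) := by
    rintro ⟨x, i, ε⟩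
    have h1 : |F (x, i, ε)| ≤ 2 := by
      simp only [hFdef]
      rw [abs_mul, hσabs, one_mul]
      exact abs_spin_sub_le _ _
    have h2 : |G (x, i, ε) - G (φ (x, i, ε))| ≤ 2 * (1 + β) / n := by
      simp only [hGdef, hφdef]
      rw [show σ * fdev n β h x - σ * fdev n β h (Function.update x i ε)
        = σ * (fdev n β h x - fdev n β h (Function.update x i ε)) by ring, abs_mul, hσabs,
        one_mul]
      exact fdev_lipschitz n hn β hβ h x i ε
    exact mul_le_mul h1 h2 (abs_nonneg _) (by norm_num)
  have hsym := symmetrization Q F G φ hinv hQφ hFφ hQ0 (2 * (1 + β) / n) hb θ hθ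
  -- compute both sides of hsym
  have hinner1 : ∀ (x : Fin n → Bool) (i : Fin n),
      (∑ ε : Bool, Q (x, i, ε) * F (x, i, ε) * Real.exp (θ * G (x, i, ε)))
      = (wght n β h x * σ * Real.exp (θ * (σ * fdev n β h x)))
        * (spin (x i) - Real.tanh (β * Gi n h x i)) := by
    intro x i
    calc (∑ ε : Bool, Q (x, i, ε) * F (x, i, ε) * Real.exp (θ * G (x, i, ε)))
        = (wght n β h x * σ * Real.exp (θ * (σ * fdev n β h x)))
          * ∑ ε : Bool, pG n β h x i ε * (spin (x i) - spin ε) := by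
          rw [Finset.mul_sum]
          exact Finset.sum_congr rfl fun ε _ => by simp only [hQdef, hFdef, hGdef]; ring
      _ = _ := by rw [pG_spin_diff]
  have hsumfd : ∀ x : Fin n → Bool,
      (∑ i, (spin (x i) - Real.tanh (β * Gi n h x i))) = n * fdev n β h x := by
    intro x
    rw [fdev]
    field_simp
  have hA : (∑ z : (Fin n → Bool) × Fin n × Bool, Q z * F z * Real.exp (θ * G z))
      = (n:ℝ) * ∑ x : Fin n → Bool,
          wght n β h x * (σ * fdev n β h x) * Real.exp (θ * (σ * fdev n β h x)) := by
    rw [Fintype.sum_prod_type, Finset.mul_sum]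
    refine Finset.sum_congr rfl fun x _ => ?_
    rw [Fintype.sum_prod_type]
    calc (∑ i, ∑ ε : Bool, Q (x, i, ε) * F (x, i, ε) * Real.exp (θ * G (x, i, ε)))
        = (wght n β h x * σ * Real.exp (θ * (σ * fdev n β h x)))
          * ∑ i, (spin (x i) - Real.tanh (β * Gi n h x i)) := by
          rw [Finset.mul_sum]
          exact Finset.sum_congr rfl fun i _ => hinner1 x i
      _ = _ := by rw [hsumfd x]; ring
  have hB : (∑ z : (Fin n → Bool) × Fin n × Bool, Q z * Real.exp (θ * G z))
      = (n:ℝ) * ∑ x : Fin n → Bool, wght n β h x * Real.exp (θ * (σ * fdev n β h x)) := by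
    rw [Fintype.sum_prod_type, Finset.mul_sum]
    refine Finset.sum_congr rfl fun x _ => ?_
    rw [Fintype.sum_prod_type]
    calc (∑ i, ∑ ε : Bool, Q (x, i, ε) * Real.exp (θ * G (x, i, ε)))
        = ∑ i : Fin n, (wght n β h x * Real.exp (θ * (σ * fdev n β h x)))
            * ∑ ε : Bool, pG n β h x i ε := by
          refine Finset.sum_congr rfl fun i _ => ?_
          rw [Finset.mul_sum]
          exact Finset.sum_congr rfl fun ε _ => by simp only [hQdef, hGdef]; ring
      _ = _ := by
          simp only [pG_sum_one, mul_one, Finset.sum_const, Finset.card_univ,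
            Fintype.card_fin, nsmul_eq_mul]
  rw [hA, hB] at hsym
  have := (mul_le_mul_iff_right₀ hn').mp (by linarith [hsym] :
    (n:ℝ) * (∑ x : Fin n → Bool,
      wght n β h x * (σ * fdev n β h x) * Real.exp (θ * (σ * fdev n β h x)))
    ≤ (n:ℝ) * ((2 * (1 + β) / n) * θ
      * ∑ x : Fin n → Bool, wght n β h x * Real.exp (θ * (σ * fdev n β h x))))
  exact this

lemma ite_nonneg' (c : Prop) [Decidable c] (wv : ℝ) (hw : 0 ≤ wv) :
    (0:ℝ) ≤ if c then wv else 0 := by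
  split_ifs
  · exact hw
  · exact le_rfl

theorem curieWeiss_concentration (n : ℕ) (hn : 1 ≤ n) (β : ℝ) (hβ : 0 ≤ β)
    (h : ℝ) (t : ℝ) (ht : 0 ≤ t) :
    cwProb n β h
      (fun x => |mag n x - Real.tanh (β * (mag n x + h))| ≥ β / n + t / Real.sqrt n) ≤
    2 * Real.exp (-t ^ 2 / (4 * (1 + β))) := by
  have hn0 : 0 < n := hn
  have hn' : (0:ℝ) < n := Nat.cast_pos.mpr hn0
  have hsqrt : (0:ℝ) < Real.sqrt n := Real.sqrt_pos.mpr hn'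
  have hC : 0 < 2 * (1 + β) / (n:ℝ) := by positivity
  have hs : 0 ≤ t / Real.sqrt n := div_nonneg ht hsqrt.le
  have hZ : 0 < Zpart n β h := by
    rw [Zpart]
    apply Finset.sum_pos (fun x _ => Real.exp_pos _)
    exact Finset.univ_nonempty
  have hexp_eq : -(t / Real.sqrt n) ^ 2 / (2 * (2 * (1 + β) / (n:ℝ)))
      = -t ^ 2 / (4 * (1 + β)) := by
    rw [div_pow, Real.sq_sqrt hn'.le]
    have h1β : (0:ℝ) < 1 + β := by linarith
    field_simp
    ring
  have hcher : ∀ σ : ℝ, σ = 1 ∨ σ = -1 →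
      ∑ x ∈ Finset.univ.filter (fun x => t / Real.sqrt n ≤ σ * fdev n β h x), wght n β h x
        ≤ Zpart n β h * Real.exp (-t ^ 2 / (4 * (1 + β))) := by
    intro σ hσ
    have hmc := mgf_chernoff (wght n β h) (fun x => σ * fdev n β h x)
      (fun x => wght_nonneg n β h x) (2 * (1 + β) / (n:ℝ)) hC
      (fun θ hθ => cw_key n hn0 β hβ h σ hσ θ hθ) (t / Real.sqrt n) hs
    rw [hexp_eq] at hmc
    exact hmc
  have hpoint : ∀ x : Fin n → Bool,
      Set.indicator {y | |mag n y - Real.tanh (β * (mag n y + h))| ≥ β / n + t / Real.sqrt n}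
        (fun y => Real.exp (-β * ham n h y)) x
      ≤ (if t / Real.sqrt n ≤ fdev n β h x then wght n β h x else 0)
        + (if t / Real.sqrt n ≤ -fdev n β h x then wght n β h x else 0) := by
    intro x
    have hpos1 := ite_nonneg' (t / Real.sqrt n ≤ fdev n β h x) (wght n β h x)
      (wght_nonneg n β h x)
    have hpos2 := ite_nonneg' (t / Real.sqrt n ≤ -fdev n β h x) (wght n β h x)
      (wght_nonneg n β h x)
    rw [Set.indicator_apply]
    by_cases hx : x ∈ {y | |mag n y - Real.tanh (β * (mag n y + h))| ≥ β / n + t / Real.sqrt n}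
    · rw [if_pos hx]
      have hxev : β / n + t / Real.sqrt n
          ≤ |mag n x - Real.tanh (β * (mag n x + h))| := hx
      have happ := fdev_approx n hn0 β hβ h x
      have habs : t / Real.sqrt n ≤ |fdev n β h x| := by
        have h2 := abs_sub_abs_le_abs_sub
          (mag n x - Real.tanh (β * (mag n x + h))) (fdev n β h x)
        have h3 : |mag n x - Real.tanh (β * (mag n x + h)) - fdev n β h x|
            = |fdev n β h x - (mag n x - Real.tanh (β * (mag n x + h)))| :=
          abs_sub_comm _ _
        rw [h3] at h2
        linarith
      have hw : Real.exp (-β * ham n h x) = wght n β h x := rfl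
      rw [hw]
      rcases le_total 0 (fdev n β h x) with hc | hc
      · rw [abs_of_nonneg hc] at habs
        rw [if_pos habs]
        linarith
      · rw [abs_of_nonpos hc] at habs
        rw [if_pos habs]
        linarith
    · rw [if_neg hx]
      linarith
  have hnum : (∑ x : Fin n → Bool,
      Set.indicator {y | |mag n y - Real.tanh (β * (mag n y + h))| ≥ β / n + t / Real.sqrt n}
        (fun y => Real.exp (-β * ham n h y)) x)
      ≤ 2 * Real.exp (-t ^ 2 / (4 * (1 + β))) * Zpart n β h := by
    calc (∑ x : Fin n → Bool,
        Set.indicator {y | |mag n y - Real.tanh (β * (mag n y + h))| ≥ β / n + t / Real.sqrt n}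
          (fun y => Real.exp (-β * ham n h y)) x)
        ≤ ∑ x : Fin n → Bool, ((if t / Real.sqrt n ≤ fdev n β h x then wght n β h x else 0)
            + (if t / Real.sqrt n ≤ -fdev n β h x then wght n β h x else 0)) :=
          Finset.sum_le_sum fun x _ => hpoint x
      _ = (∑ x ∈ Finset.univ.filter (fun x => t / Real.sqrt n ≤ (1:ℝ) * fdev n β h x),
            wght n β h x)
          + ∑ x ∈ Finset.univ.filter (fun x => t / Real.sqrt n ≤ (-1:ℝ) * fdev n β h x),
            wght n β h x := by
          rw [Finset.sum_add_distrib, Finset.sum_filter, Finset.sum_filter]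
          simp only [one_mul, neg_one_mul]
      _ ≤ Zpart n β h * Real.exp (-t ^ 2 / (4 * (1 + β)))
          + Zpart n β h * Real.exp (-t ^ 2 / (4 * (1 + β))) :=
          add_le_add (hcher 1 (Or.inl rfl)) (hcher (-1) (Or.inr rfl))
      _ = 2 * Real.exp (-t ^ 2 / (4 * (1 + β))) * Zpart n β h := by ring
  rw [cwProb, div_le_iff₀ hZ]
  exact hnum
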